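/- arXiv:0801.3184 — 2 statements merged into one kernel-verified Lean document; each statement's English description precedes it below -/
import Mathlib

section
/- Let p ∈ (0,1] and k a positive integer. Then ∑_{r=0}^{kn-1} p (1-p)^r * (∑_{i=r+1}^{kn} 1/i) − (∑_{i=1}^{kn} 1/i + log p) tends to 0 as n → ∞. -/
theorem expected_duration_asymptotic (p : ℝ) (hp0 : 0 < p) (hp1 : p ≤ 1) (k : ℕ) (hk : 0 < k) :
    Filter.Tendsto
      (fun n : ℕ =>
        (∑ r ∈ Finset.range (k * n),
          p * (1 - p) ^ r * ∑ i ∈ Finset.Icc (r + 1) (k * n), (1 : ℝ) / i) -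
        ((∑ i ∈ Finset.Icc 1 (k * n), (1 : ℝ) / i) + Real.log p))
      Filter.atTop (nhds 0) := by
  set q : ℝ := 1 - p with hq
  have hq0 : 0 ≤ q := by simp [hq]; linarith
  have hq1 : q < 1 := by simp [hq]; linarith
  -- geometric sum
  have geom : ∀ M : ℕ, (∑ r ∈ Finset.range M, p * q ^ r) = 1 - q ^ M := by
    intro M
    have := geom_sum_mul q M
    have hpq : p = -(q - 1) := by rw [hq]; ring
    calc (∑ r ∈ Finset.range M, p * q ^ r) = -((∑ r ∈ Finset.range M, q ^ r) * (q - 1)) := by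
          rw [Finset.sum_mul, ← Finset.sum_neg_distrib]
          exact Finset.sum_congr rfl fun r _ => by rw [hpq]; ring
      _ = 1 - q ^ M := by rw [this]; ring
  -- key identity
  have key : ∀ N : ℕ, (∑ r ∈ Finset.range N, p * q ^ r * ∑ i ∈ Finset.Icc (r + 1) N, (1:ℝ)/i)
      = ∑ i ∈ Finset.Icc 1 N, (1 - q ^ i) / i := by
    intro N
    induction N with
    | zero => simp
    | succ N ih =>
      have step : ∀ r ∈ Finset.range N,
          p * q ^ r * ∑ i ∈ Finset.Icc (r + 1) (N + 1), (1:ℝ)/i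
          = p * q ^ r * ∑ i ∈ Finset.Icc (r + 1) N, (1:ℝ)/i + p * q ^ r * (1/(N+1)) := by
        intro r hr
        have hr' : r < N := Finset.mem_range.mp hr
        rw [Finset.sum_Icc_succ_top (by omega : r + 1 ≤ N + 1)]
        push_cast
        ring
      rw [Finset.sum_range_succ, Finset.sum_congr rfl step, Finset.sum_add_distrib, ih,
        Finset.Icc_self, Finset.sum_singleton,
        Finset.sum_Icc_succ_top (by omega : 1 ≤ N + 1), ← Finset.sum_mul, geom]
      push_cast
      ring
  -- tail sum tendsto
  have habs : |q| < 1 := by rw [abs_of_nonneg hq0]; exact hq1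
  have hsum := (Real.hasSum_pow_div_log_of_abs_lt_one habs).tendsto_sum_nat
  have hpart : Filter.Tendsto (fun N : ℕ => ∑ i ∈ Finset.Icc 1 N, q ^ i / i)
      Filter.atTop (nhds (-Real.log (1 - q))) := by
    refine hsum.congr fun N => ?_
    rw [show Finset.Icc 1 N = Finset.Ico 1 (N+1) from (Finset.Ico_add_one_right_eq_Icc 1 N).symm,
      Finset.sum_Ico_eq_sum_range]
    simp only [Nat.add_sub_cancel]
    refine Finset.sum_congr rfl fun i _ => ?_
    push_cast
    ring_nf
  have hcomp : Filter.Tendsto (fun n : ℕ => k * n) Filter.atTop Filter.atTop :=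
    Filter.tendsto_atTop_mono (fun n => Nat.le_mul_of_pos_left n hk) Filter.tendsto_id
  have hfin : Filter.Tendsto
      (fun n : ℕ => -(∑ i ∈ Finset.Icc 1 (k * n), q ^ i / i) - Real.log p)
      Filter.atTop (nhds 0) := by
    have := ((hpart.comp hcomp).neg).sub_const (Real.log p)
    simp only [neg_neg] at this
    have heq : Real.log (1 - q) - Real.log p = 0 := by
      rw [hq]; ring_nf
    rwa [heq] at this
  refine hfin.congr fun n => ?_
  rw [key (k * n)]
  rw [show (∑ i ∈ Finset.Icc 1 (k*n), (1 - q ^ i) / (i:ℝ))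
      = (∑ i ∈ Finset.Icc 1 (k*n), (1:ℝ)/i) - ∑ i ∈ Finset.Icc 1 (k*n), q ^ i / (i:ℝ) by
    rw [← Finset.sum_sub_distrib]
    exact Finset.sum_congr rfl fun i _ => by ring]
  ring
end

section
/- Define functions F_n : [0,∞) → ℝ by F_0(t) = F_1(t) = 1 and F_n(t) = ∫_0^t ∑_{r=1}^{n-1} F_r(t-s) F_{n-1-r}(t-s) e^{-(n-1)s} ds for n ≥ 2. Then for all n and t, 0 ≤ F_n(t) ≤ 1, and F_n is monotone nondecreasing in t. -/
open MeasureTheory intervalIntegral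

noncomputable def Gfun : ℕ → ℝ → ℝ
  | 0 => fun _ => 1
  | 1 => fun _ => 1
  | (n+2) => fun t => ∫ s in (0:ℝ)..t,
      ∑ r ∈ (Finset.Icc 1 (n+1)).attach,
        Gfun r.1 (t - s) * Gfun (n + 1 - r.1) (t - s) * Real.exp (-((n:ℝ) + 1) * s)
  decreasing_by
  · have := (Finset.mem_Icc.mp r.2).2; omega
  · omega

lemma Gfun_succ (n : ℕ) (t : ℝ) : Gfun (n+2) t = ∫ s in (0:ℝ)..t,
    ∑ r ∈ Finset.Icc 1 (n+1),
      Gfun r (t - s) * Gfun (n + 1 - r) (t - s) * Real.exp (-((n:ℝ) + 1) * s) := by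
  rw [Gfun]
  beta_reduce
  congr 1
  funext s
  exact Finset.sum_attach (Finset.Icc 1 (n+1))
    (fun r => Gfun r (t - s) * Gfun (n + 1 - r) (t - s) * Real.exp (-((n:ℝ) + 1) * s))

noncomputable def kfun (n : ℕ) (u : ℝ) : ℝ :=
  ∑ r ∈ Finset.Icc 1 (n+1), Gfun r u * Gfun (n + 1 - r) u

lemma Gfun_factored (n : ℕ) (t : ℝ) :
    Gfun (n+2) t = Real.exp (-(((n:ℝ)+1) * t)) *
      ∫ u in (0:ℝ)..t, kfun n u * Real.exp (((n:ℝ)+1) * u) := by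
  set c : ℝ := (n:ℝ)+1
  have h1 : Gfun (n+2) t = ∫ s in (0:ℝ)..t,
      (fun u => kfun n u * Real.exp (-(c * (t - u)))) (t - s) := by
    rw [Gfun_succ]
    congr 1
    funext s
    rw [← Finset.sum_mul]
    simp only [kfun, sub_sub_cancel]
    ring_nf
    simp only [c]
    ring_nf
  rw [h1, integral_comp_sub_left (fun u => kfun n u * Real.exp (-(c * (t - u)))) t,
    sub_self, sub_zero]
  rw [← intervalIntegral.integral_const_mul]
  congr 1
  funext u
  rw [show -(c * (t - u)) = -(c*t) + c*u by ring, Real.exp_add]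
  ring

lemma exp_hasDerivAt (c x : ℝ) :
    HasDerivAt (fun u : ℝ => Real.exp (c * u)) (c * Real.exp (c * x)) x := by
  have := (Real.hasDerivAt_exp (c*x)).comp x ((hasDerivAt_id x).const_mul c)
  exact this.congr_deriv (by ring)

lemma exp_integral (c t : ℝ) :
    (∫ u in (0:ℝ)..t, c * Real.exp (c * u)) = Real.exp (c * t) - 1 := by
  have h := intervalIntegral.integral_eq_sub_of_hasDerivAt
    (f := fun u : ℝ => Real.exp (c * u)) (f' := fun u : ℝ => c * Real.exp (c * u))
    (fun x _ => exp_hasDerivAt c x)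
    ((continuous_const.mul (Real.continuous_exp.comp
      (continuous_const.mul continuous_id))).intervalIntegrable 0 t)
  simpa using h

lemma Gmain (n : ℕ) : Continuous (Gfun n) ∧ (∀ t, 0 ≤ t → 0 ≤ Gfun n t ∧ Gfun n t ≤ 1) ∧
    MonotoneOn (Gfun n) (Set.Ici 0) := by
  induction n using Nat.strong_induction_on with
  | _ n IH =>
    match n with
    | 0 =>
      have hfun : Gfun 0 = fun _ : ℝ => (1:ℝ) := by rw [Gfun]
      rw [hfun]
      exact ⟨continuous_const, fun t _ => ⟨zero_le_one, le_refl 1⟩, monotoneOn_const⟩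
    | 1 =>
      have hfun : Gfun 1 = fun _ : ℝ => (1:ℝ) := by rw [Gfun]
      rw [hfun]
      exact ⟨continuous_const, fun t _ => ⟨zero_le_one, le_refl 1⟩, monotoneOn_const⟩
    | (n+2) =>
      set c : ℝ := (n:ℝ)+1 with hc_def
      have hc : 0 < c := by positivity
      have hmem : ∀ r ∈ Finset.Icc 1 (n+1), r < n + 2 ∧ n + 1 - r < n + 2 := by
        intro r hr
        have := Finset.mem_Icc.mp hr
        omega
      have kcont : Continuous (kfun n) := by
        apply continuous_finset_sum
        intro r hr
        exact ((IH r (hmem r hr).1).1).mul ((IH (n+1-r) (hmem r hr).2).1)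
      have knonneg : ∀ u : ℝ, 0 ≤ u → 0 ≤ kfun n u := by
        intro u hu
        apply Finset.sum_nonneg
        intro r hr
        exact mul_nonneg ((IH r (hmem r hr).1).2.1 u hu).1 ((IH (n+1-r) (hmem r hr).2).2.1 u hu).1
      have kle : ∀ u : ℝ, 0 ≤ u → kfun n u ≤ c := by
        intro u hu
        have h : kfun n u ≤ ∑ r ∈ Finset.Icc 1 (n+1), (1:ℝ) := by
          apply Finset.sum_le_sum
          intro r hr
          calc Gfun r u * Gfun (n+1-r) u ≤ 1 * 1 :=
                mul_le_mul ((IH r (hmem r hr).1).2.1 u hu).2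
                  ((IH (n+1-r) (hmem r hr).2).2.1 u hu).2
                  ((IH (n+1-r) (hmem r hr).2).2.1 u hu).1 zero_le_one
            _ = 1 := one_mul 1
        calc kfun n u ≤ ∑ r ∈ Finset.Icc 1 (n+1), (1:ℝ) := h
          _ = c := by simp [hc_def]
      have kmono : MonotoneOn (kfun n) (Set.Ici 0) := by
        intro a ha b hb hab
        apply Finset.sum_le_sum
        intro r hr
        have h1 := IH r (hmem r hr).1
        have h2 := IH (n+1-r) (hmem r hr).2
        exact mul_le_mul (h1.2.2 ha hb hab) (h2.2.2 ha hb hab) (h2.2.1 a ha).1 (h1.2.1 b hb).1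
      set g : ℝ → ℝ := fun u => kfun n u * Real.exp (c * u) with hg_def
      have gcont : Continuous g :=
        kcont.mul (Real.continuous_exp.comp (continuous_const.mul continuous_id))
      set P : ℝ → ℝ := fun t => ∫ u in (0:ℝ)..t, g u with hP_def
      have hP : ∀ t : ℝ, HasStrictDerivAt P (g t) t := fun t =>
        gcont.integral_hasStrictDerivAt 0 t
      have hGP : Gfun (n+2) = fun t => Real.exp (-(c*t)) * P t := by
        funext t; exact Gfun_factored n t
      have hGderiv : ∀ t : ℝ, HasDerivAt (Gfun (n+2))
          (-c * Real.exp (-(c*t)) * P t + Real.exp (-(c*t)) * g t) t := by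
        intro t
        rw [hGP]
        have h1 : HasDerivAt (fun t : ℝ => Real.exp (-(c*t))) (-c * Real.exp (-(c*t))) t := by
          have := exp_hasDerivAt (-c) t
          simpa [neg_mul] using this
        exact h1.mul (hP t).hasDerivAt
      have hGdiff : Differentiable ℝ (Gfun (n+2)) := fun t => (hGderiv t).differentiableAt
      have hGcont : Continuous (Gfun (n+2)) := hGdiff.continuous
      -- bound on P
      have hP0 : ∀ t : ℝ, 0 ≤ t → 0 ≤ P t := by
        intro t ht
        apply intervalIntegral.integral_nonneg ht
        intro u hu
        exact mul_nonneg (knonneg u hu.1) (Real.exp_nonneg _)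
      have hPle : ∀ t : ℝ, 0 ≤ t → P t ≤ Real.exp (c*t) - 1 := by
        intro t ht
        rw [← exp_integral c t]
        apply intervalIntegral.integral_mono_on ht
          (gcont.intervalIntegrable 0 t)
          ((continuous_const.mul (Real.continuous_exp.comp
            (continuous_const.mul continuous_id))).intervalIntegrable 0 t)
        intro u hu
        exact mul_le_mul_of_nonneg_right (kle u hu.1) (Real.exp_nonneg _)
      have hbound : ∀ t, 0 ≤ t → 0 ≤ Gfun (n+2) t ∧ Gfun (n+2) t ≤ 1 := by
        intro t ht
        rw [hGP]
        constructor
        · exact mul_nonneg (Real.exp_nonneg _) (hP0 t ht)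
        · have h1 : Real.exp (-(c*t)) * P t ≤ Real.exp (-(c*t)) * (Real.exp (c*t) - 1) :=
            mul_le_mul_of_nonneg_left (hPle t ht) (Real.exp_nonneg _)
          have h2 : Real.exp (-(c*t)) * (Real.exp (c*t) - 1) = 1 - Real.exp (-(c*t)) := by
            rw [mul_sub, ← Real.exp_add]
            simp
          have h3 : 0 ≤ Real.exp (-(c*t)) := Real.exp_nonneg _
          simp only []
          linarith
      refine ⟨hGcont, hbound, ?_⟩
      apply monotoneOn_of_deriv_nonneg (convex_Ici 0) hGcont.continuousOn
        hGdiff.differentiableOn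
      intro x hx
      rw [interior_Ici] at hx
      have hx0 : (0:ℝ) ≤ x := le_of_lt hx
      rw [(hGderiv x).deriv]
      -- need: 0 ≤ -c * exp(-(cx)) * P x + exp(-(cx)) * g x
      have key : c * P x ≤ g x := by
        have h1 : c * P x = ∫ u in (0:ℝ)..x, c * g u := by
          rw [intervalIntegral.integral_const_mul]
        have h2 : (∫ u in (0:ℝ)..x, c * g u) ≤ ∫ u in (0:ℝ)..x, kfun n x * (c * Real.exp (c*u)) := by
          apply intervalIntegral.integral_mono_on hx0
            ((continuous_const.mul gcont).intervalIntegrable 0 x)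
            ((continuous_const.mul (continuous_const.mul (Real.continuous_exp.comp
              (continuous_const.mul continuous_id)))).intervalIntegrable 0 x)
          intro u hu
          have hku : kfun n u ≤ kfun n x := kmono hu.1 hx0 hu.2
          simp only [hg_def]
          calc c * (kfun n u * Real.exp (c*u)) = kfun n u * (c * Real.exp (c*u)) := by ring
            _ ≤ kfun n x * (c * Real.exp (c*u)) := mul_le_mul_of_nonneg_right hku (by positivity)
        have h3 : (∫ u in (0:ℝ)..x, kfun n x * (c * Real.exp (c*u)))
            = kfun n x * (Real.exp (c*x) - 1) := by
          rw [intervalIntegral.integral_const_mul, exp_integral]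
        have h4 : kfun n x * (Real.exp (c*x) - 1) ≤ kfun n x * Real.exp (c*x) := by
          have := knonneg x hx0
          nlinarith
        calc c * P x = ∫ u in (0:ℝ)..x, c * g u := h1
          _ ≤ kfun n x * (Real.exp (c*x) - 1) := h2.trans (le_of_eq h3)
          _ ≤ kfun n x * Real.exp (c*x) := h4
          _ = g x := by rw [hg_def]
      have hexp : 0 < Real.exp (-(c*x)) := Real.exp_pos _
      nlinarith [key, hexp]

lemma FG (F : ℕ → ℝ → ℝ)
    (h0 : ∀ t, 0 ≤ t → F 0 t = 1) (h1 : ∀ t, 0 ≤ t → F 1 t = 1)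
    (hrec : ∀ n, 2 ≤ n → ∀ t, 0 ≤ t →
      F n t = ∫ s in (0 : ℝ)..t,
        ∑ r ∈ Finset.Icc 1 (n - 1),
          F r (t - s) * F (n - 1 - r) (t - s) * Real.exp (-((n : ℝ) - 1) * s)) :
    ∀ n t, 0 ≤ t → F n t = Gfun n t := by
  intro n
  induction n using Nat.strong_induction_on with
  | _ n IH =>
    match n with
    | 0 => intro t ht; rw [h0 t ht, Gfun]
    | 1 => intro t ht; rw [h1 t ht, Gfun]
    | (m+2) =>
      intro t ht
      rw [hrec (m+2) (by omega) t ht, Gfun_succ]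
      apply intervalIntegral.integral_congr
      intro s hs
      rw [Set.uIcc_of_le ht] at hs
      have hts : 0 ≤ t - s := by linarith [hs.2]
      beta_reduce
      rw [show ((((m+2:ℕ)):ℝ) - 1) = (m:ℝ)+1 by push_cast; ring]
      simp only [show m+2-1 = m+1 from rfl]
      apply Finset.sum_congr rfl
      intro r hr
      have hrm := Finset.mem_Icc.mp hr
      rw [IH r (by omega) _ hts, IH (m+1-r) (by omega) _ hts]

theorem annihilation_cdf_bounds_monotone (F : ℕ → ℝ → ℝ)
    (h0 : ∀ t, 0 ≤ t → F 0 t = 1) (h1 : ∀ t, 0 ≤ t → F 1 t = 1)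
    (hrec : ∀ n, 2 ≤ n → ∀ t, 0 ≤ t →
      F n t = ∫ s in (0 : ℝ)..t,
        ∑ r ∈ Finset.Icc 1 (n - 1),
          F r (t - s) * F (n - 1 - r) (t - s) * Real.exp (-((n : ℝ) - 1) * s)) :
    (∀ n, ∀ t, 0 ≤ t → 0 ≤ F n t ∧ F n t ≤ 1) ∧
    (∀ n, ∀ s t, 0 ≤ s → s ≤ t → F n s ≤ F n t) := by
  have hFG := FG F h0 h1 hrec
  constructor
  · intro n t ht
    rw [hFG n t ht]
    exact (Gmain n).2.1 t ht
  · intro n s t hs hst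
    have ht : 0 ≤ t := hs.trans hst
    rw [hFG n s hs, hFG n t ht]
    exact (Gmain n).2.2 hs ht hst
end
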